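/- Let p be a prime number and let Γ be an abelian group such that the torsion subgroup of Γ is isomorphic, as an abstract abelian group, to a subgroup of (ℚ/ℤ)^n for some positive integer n, and such that dim_ℚ(Γ ⊗_ℤ ℚ) = r is finite. Let Γ[p] = {x ∈ Γ : p·x = 0} and pΓ = {p·x : x ∈ Γ}. Then Γ/pΓ is finite and #(Γ/pΓ) ≤ p^r · #(Γ[p]) ≤ p^{n+r}. -/

import Mathlib

variable {p : ℕ}

lemma phi_apply {G : Type*} [AddCommGroup G] (x : G) : (p • AddMonoidHom.id G) x = p • x := rfl

lemma mem_phi_ker {G : Type*} [AddCommGroup G] (x : G) :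
    x ∈ (p • AddMonoidHom.id G).ker ↔ p • x = 0 := Iff.rfl

lemma mem_phi_range {G : Type*} [AddCommGroup G] (y : G) :
    y ∈ (p • AddMonoidHom.id G).range ↔ ∃ x, p • x = y := Iff.rfl

-- transport
noncomputable def kerEquiv {G H : Type*} [AddCommGroup G] [AddCommGroup H] (e : G ≃+ H) :
    (p • AddMonoidHom.id G).ker ≃+ (p • AddMonoidHom.id H).ker :=
  (e.addSubgroupMap _).trans (AddEquiv.addSubgroupCongr (by
    ext y
    simp only [AddSubgroup.mem_map, mem_phi_ker]
    constructor
    · rintro ⟨x, hx, rfl⟩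
      rw [← map_nsmul, hx, map_zero]
    · intro hy
      exact ⟨e.symm y, by rw [← map_nsmul, hy, map_zero], by simp⟩))

noncomputable def quotEquiv {G H : Type*} [AddCommGroup G] [AddCommGroup H] (e : G ≃+ H) :
    (G ⧸ (p • AddMonoidHom.id G).range) ≃+ (H ⧸ (p • AddMonoidHom.id H).range) :=
  QuotientAddGroup.congr _ _ e (by
    ext y
    simp only [AddSubgroup.mem_map, mem_phi_range]
    constructor
    · rintro ⟨x, ⟨z, rfl⟩, rfl⟩
      exact ⟨e z, (map_nsmul e p z).symm⟩
    · rintro ⟨x, rfl⟩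
      exact ⟨p • e.symm x, ⟨_, rfl⟩, by rw [map_nsmul]; simp⟩)
noncomputable def kerProdEquiv (G H : Type*) [AddCommGroup G] [AddCommGroup H] :
    (p • AddMonoidHom.id (G × H)).ker ≃+ (p • AddMonoidHom.id G).ker × (p • AddMonoidHom.id H).ker :=
  (AddEquiv.addSubgroupCongr (by
    ext x
    simp only [mem_phi_ker, AddSubgroup.mem_prod, Prod.ext_iff, Prod.smul_def]
    exact Iff.rfl)).trans
    (AddSubgroup.prodEquiv (p • AddMonoidHom.id G).ker (p • AddMonoidHom.id H).ker)

noncomputable def quotProdEquiv (G H : Type*) [AddCommGroup G] [AddCommGroup H] :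
    ((G × H) ⧸ (p • AddMonoidHom.id (G × H)).range) ≃+
      (G ⧸ (p • AddMonoidHom.id G).range) × (H ⧸ (p • AddMonoidHom.id H).range) := by
  have h : (p • AddMonoidHom.id (G × H)).range =
      ((QuotientAddGroup.mk' (p • AddMonoidHom.id G).range).prodMap
        (QuotientAddGroup.mk' (p • AddMonoidHom.id H).range)).ker := by
    ext x
    simp only [AddMonoidHom.mem_ker, AddMonoidHom.coe_prodMap, Prod.map_apply,
      QuotientAddGroup.mk'_apply, Prod.ext_iff, Prod.fst_zero, Prod.snd_zero,
      Prod.map_fst, Prod.map_snd, Prod.smul_fst, Prod.smul_snd,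
      QuotientAddGroup.eq_zero_iff, mem_phi_range]
    constructor
    · rintro ⟨y, hy1, hy2⟩
      exact ⟨⟨y.1, hy1⟩, ⟨y.2, hy2⟩⟩
    · rintro ⟨⟨a, ha⟩, ⟨b, hb⟩⟩
      exact ⟨(a, b), ha, hb⟩
  refine (QuotientAddGroup.quotientAddEquivOfEq h).trans ?_
  exact QuotientAddGroup.quotientKerEquivOfSurjective _
    (Function.Surjective.prodMap (QuotientAddGroup.mk'_surjective _) (QuotientAddGroup.mk'_surjective _))


lemma card_quot_eq_card_ker_of_finite (G : Type*) [AddCommGroup G] [Finite G] :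
    Nat.card (G ⧸ (p • AddMonoidHom.id G).range) = Nat.card (p • AddMonoidHom.id G).ker := by
  set φ := p • AddMonoidHom.id G
  have h1 := AddSubgroup.card_eq_card_quotient_mul_card_addSubgroup φ.range
  have h2 := AddSubgroup.card_eq_card_quotient_mul_card_addSubgroup φ.ker
  have h3 : Nat.card (G ⧸ φ.ker) = Nat.card φ.range :=
    Nat.card_congr (QuotientAddGroup.quotientKerEquivRange φ).toEquiv
  have hr : 0 < Nat.card φ.range := Nat.card_pos
  rw [h3] at h2
  rw [mul_comm] at h1
  exact Nat.eq_of_mul_eq_mul_left hr (h1.symm.trans h2)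

lemma ker_pi_int (hp : p ≠ 0) (s : ℕ) :
    (p • AddMonoidHom.id (Fin s → ℤ)).ker = ⊥ := by
  ext g
  simp only [AddMonoidHom.mem_ker, AddSubgroup.mem_bot]
  constructor
  · intro h
    replace h : p • g = (0 : Fin s → ℤ) := h
    funext i
    have h' : (p : ℤ) * g i = 0 := by
      have := congrFun h i
      simpa [nsmul_eq_mul] using this
    rcases mul_eq_zero.1 h' with h'' | h''
    · exact absurd (by exact_mod_cast h'') hp
    · simpa using h''
  · rintro rfl
    show p • (0 : Fin s → ℤ) = 0
    simp

noncomputable def quotPiIntEquiv (hp : p ≠ 0) (s : ℕ) :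
    ((Fin s → ℤ) ⧸ (p • AddMonoidHom.id (Fin s → ℤ)).range) ≃+ (Fin s → ZMod p) := by
  let h : (Fin s → ℤ) →+ (Fin s → ZMod p) :=
    AddMonoidHom.compLeft (Int.castAddHom (ZMod p)) (Fin s)
  have happ : ∀ (g : Fin s → ℤ) (i : Fin s), h g i = ((g i : ℤ) : ZMod p) := fun g i => rfl
  have hker : (p • AddMonoidHom.id (Fin s → ℤ)).range = h.ker := by
    ext g
    simp only [AddMonoidHom.mem_ker, AddMonoidHom.mem_range]
    constructor
    · rintro ⟨y, rfl⟩
      funext i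
      show h (p • y) i = 0
      rw [happ]
      show (((p • y) i : ℤ) : ZMod p) = 0
      push_cast
      simp
    · intro hg
      have hdvd : ∀ i, (p : ℤ) ∣ g i := by
        intro i
        have := congrFun hg i
        rw [happ] at this
        rw [show (0 : Fin s → ZMod p) i = 0 from rfl] at this
        rwa [ZMod.intCast_zmod_eq_zero_iff_dvd] at this
      refine ⟨fun i => g i / p, ?_⟩
      show p • (fun i => g i / p) = g
      funext i
      show p • (g i / p) = g i
      obtain ⟨c, hc⟩ := hdvd i
      rw [hc, Int.mul_ediv_cancel_left _ (by exact_mod_cast hp), nsmul_eq_mul]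
  have hsurj : Function.Surjective h := by
    intro b
    have hc : ∀ i, ∃ z : ℤ, ((z : ℤ) : ZMod p) = b i := fun i => ZMod.intCast_surjective (b i)
    choose w hw using hc
    exact ⟨w, funext fun i => (happ w i).trans (hw i)⟩
  exact (QuotientAddGroup.quotientAddEquivOfEq hker).trans
    (QuotientAddGroup.quotientKerEquivOfSurjective h hsurj)

lemma fg_card_quot (hp : p ≠ 0) (G : Type*) [AddCommGroup G] (hG : AddGroup.FG G) :
    ∃ s : ℕ, Finite (G ⧸ (p • AddMonoidHom.id G).range) ∧
      Finite (p • AddMonoidHom.id G).ker ∧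
      Nat.card (G ⧸ (p • AddMonoidHom.id G).range) =
        p ^ s * Nat.card (p • AddMonoidHom.id G).ker ∧
      ∃ j : (Fin s → ℤ) →+ G, Function.Injective j := by
  haveI : NeZero p := ⟨hp⟩
  obtain ⟨s, ι, fι, q, hq, ee, ⟨e0⟩⟩ := AddCommGroup.equiv_free_prod_directSum_zmod G
  haveI : ∀ i : ι, NeZero (q i ^ ee i) := fun i => ⟨pow_ne_zero _ (hq i).ne_zero⟩
  set D := DirectSum ι (fun i => ZMod (q i ^ ee i)) with hD
  haveI : Finite D := by
    have := (DirectSum.linearEquivFunOnFintype ℤ ι (fun i => ZMod (q i ^ ee i))).toEquiv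
    exact Finite.of_equiv _ this.symm
  let e : G ≃+ (Fin s → ℤ) × D :=
    e0.trans (((Finsupp.linearEquivFunOnFinite ℤ ℤ (Fin s)).toAddEquiv).prodCongr (AddEquiv.refl D))
  -- ker
  have hkerG : Nat.card (p • AddMonoidHom.id G).ker = Nat.card (p • AddMonoidHom.id D).ker := by
    rw [Nat.card_congr (kerEquiv e).toEquiv, Nat.card_congr (kerProdEquiv (Fin s → ℤ) D).toEquiv,
      Nat.card_prod, ker_pi_int hp, AddSubgroup.card_bot, one_mul]
  have hfinkerD : Finite (p • AddMonoidHom.id D).ker := Subtype.finite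
  haveI : Finite ((p • AddMonoidHom.id (Fin s → ℤ)).ker) := by
    rw [ker_pi_int hp]; exact Finite.of_subsingleton
  have hfinkerG : Finite (p • AddMonoidHom.id G).ker :=
    Finite.of_equiv _ ((kerEquiv e).toEquiv.trans (kerProdEquiv (Fin s → ℤ) D).toEquiv).symm
  -- quot
  let eq1 := ((quotEquiv (p := p) e).trans (quotProdEquiv (Fin s → ℤ) D)).toEquiv
  haveI : Finite ((Fin s → ℤ) ⧸ (p • AddMonoidHom.id (Fin s → ℤ)).range) :=
    Finite.of_equiv _ (quotPiIntEquiv hp s).toEquiv.symm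
  haveI : Finite (D ⧸ (p • AddMonoidHom.id D).range) := Quotient.finite _
  haveI hfinq : Finite (G ⧸ (p • AddMonoidHom.id G).range) := Finite.of_equiv _ eq1.symm
  refine ⟨s, hfinq, hfinkerG, ?_, ?_⟩
  · rw [Nat.card_congr eq1, Nat.card_prod, Nat.card_congr (quotPiIntEquiv hp s).toEquiv,
      card_quot_eq_card_ker_of_finite D, ← hkerG, Nat.card_fun, Nat.card_zmod, Nat.card_eq_fintype_card,
      Fintype.card_fin]
  · refine ⟨(e.symm.toAddMonoidHom.comp (AddMonoidHom.inl _ D)), ?_⟩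
    intro a b hab
    simpa using congrArg Prod.fst (e.symm.injective hab)

lemma addCircle_torsion_surj {p : ℕ} (hp : p ≠ 0) :
    ∃ σ : ZMod p → {u : AddCircle (1 : ℚ) // p • u = 0}, Function.Surjective σ := by
  haveI : NeZero p := ⟨hp⟩
  have hp' : (p : ℚ) ≠ 0 := Nat.cast_ne_zero.mpr hp
  refine ⟨fun m => ⟨((m.val : ℚ) / p : ℚ), ?_⟩, ?_⟩
  · rw [← AddCircle.coe_nsmul, AddCircle.coe_eq_zero_iff]
    refine ⟨(m.val : ℤ), ?_⟩
    simp only [zsmul_eq_mul, mul_one, nsmul_eq_mul, Int.cast_natCast]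
    field_simp
  · rintro ⟨u, hu⟩
    induction u using QuotientAddGroup.induction_on with
    | H q =>
    rw [← AddCircle.coe_nsmul, AddCircle.coe_eq_zero_iff] at hu
    obtain ⟨k, hk⟩ := hu
    have hk' : (k : ℚ) = p * q := by
      rw [zsmul_eq_mul, mul_one] at hk
      rw [hk, nsmul_eq_mul]
    have hq : q = (k : ℚ) / p := by rw [eq_div_iff hp']; linarith [hk']
    refine ⟨(k : ZMod p), ?_⟩
    ext
    show (↑((((k : ZMod p)).val : ℚ) / p) : AddCircle (1:ℚ)) = ↑q
    rw [hq]
    have hdvd : (p : ℤ) ∣ (((k : ZMod p)).val : ℤ) - k := by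
      rw [← ZMod.intCast_zmod_eq_zero_iff_dvd]
      push_cast
      simp [ZMod.natCast_val, ZMod.cast_id]
    obtain ⟨c, hc⟩ := hdvd
    have hcq : ((((k : ZMod p)).val : ℚ)) - (k : ℚ) = (p : ℚ) * c := by
      exact_mod_cast congrArg (fun z : ℤ => (z : ℚ)) hc
    rw [eq_comm, ← sub_eq_zero, ← AddCircle.coe_sub, AddCircle.coe_eq_zero_iff]
    refine ⟨-c, ?_⟩
    rw [zsmul_eq_mul, mul_one]
    rw [div_sub_div_same]
    rw [eq_div_iff hp']
    push_cast
    linarith [hcq]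


open TensorProduct

/-- Let `p` be a prime and `Γ` an abelian group whose torsion subgroup embeds into
`(ℚ/ℤ)ⁿ` (`n ≥ 1`) and with `dim_ℚ (Γ ⊗_ℤ ℚ) = r`. Then `Γ/pΓ` is finite and
`#(Γ/pΓ) ≤ p^r · #(Γ[p]) ≤ p^(n+r)`. -/
theorem card_quot_le_pow_mul_card_torsion {p n r : ℕ} (hp : p.Prime) (hn : 0 < n)
    {Γ : Type*} [AddCommGroup Γ]
    (f : AddCommGroup.torsion Γ →+ (Fin n → AddCircle (1 : ℚ)))
    (hf : Function.Injective f)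
    (hr : Module.rank ℚ (ℚ ⊗[ℤ] Γ) = r) :
    Finite (Γ ⧸ (p • AddMonoidHom.id Γ).range) ∧
      Nat.card (Γ ⧸ (p • AddMonoidHom.id Γ).range) ≤
        p ^ r * Nat.card ((p • AddMonoidHom.id Γ).ker) ∧
      p ^ r * Nat.card ((p • AddMonoidHom.id Γ).ker) ≤ p ^ (n + r) := by
  have hp0 : p ≠ 0 := hp.ne_zero
  haveI : NeZero p := ⟨hp0⟩
  set φ := p • AddMonoidHom.id Γ with hφ
  set K := φ.ker with hK
  set V := Γ ⧸ φ.range with hV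
  -- Step 1 : K is finite with at most p ^ n elements
  obtain ⟨σ, hσ⟩ := addCircle_torsion_surj hp0
  haveI hfinT : Finite {u : AddCircle (1 : ℚ) // p • u = 0} := Finite.of_surjective σ hσ
  have hcardT : Nat.card {u : AddCircle (1 : ℚ) // p • u = 0} ≤ p := by
    calc Nat.card {u : AddCircle (1 : ℚ) // p • u = 0} ≤ Nat.card (ZMod p) :=
          Nat.card_le_card_of_surjective σ hσ
      _ = p := Nat.card_zmod p
  have hmemtor : ∀ x : K, (x : Γ) ∈ AddCommGroup.torsion Γ := by
    intro x
    have hx : p • (x : Γ) = 0 := x.2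
    exact isOfFinAddOrder_iff_nsmul_eq_zero.mpr ⟨p, hp.pos, hx⟩
  let k : K → (Fin n → {u : AddCircle (1 : ℚ) // p • u = 0}) := fun x i =>
    ⟨f ⟨(x : Γ), hmemtor x⟩ i, by
      have hx : p • (⟨(x : Γ), hmemtor x⟩ : AddCommGroup.torsion Γ) = 0 := by
        ext
        exact x.2
      have := congrFun (congrArg (fun z => (z : Fin n → AddCircle (1:ℚ))) (map_nsmul f p
        (⟨(x : Γ), hmemtor x⟩ : AddCommGroup.torsion Γ))) i
      rw [hx, map_zero] at this
      simpa using this.symm⟩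
  have hkinj : Function.Injective k := by
    intro x y hxy
    have h1 : f ⟨(x : Γ), hmemtor x⟩ = f ⟨(y : Γ), hmemtor y⟩ := by
      funext i
      exact congrArg Subtype.val (congrFun hxy i)
    have h2 := hf h1
    exact Subtype.ext (congrArg (fun z : AddCommGroup.torsion Γ => (z : Γ)) h2)
  haveI hKfin : Finite K := Finite.of_injective k hkinj
  have hKcard : Nat.card K ≤ p ^ n := by
    calc Nat.card K ≤ Nat.card (Fin n → {u : AddCircle (1 : ℚ) // p • u = 0}) :=
          Nat.card_le_card_of_injective k hkinj
      _ = Nat.card {u : AddCircle (1 : ℚ) // p • u = 0} ^ n := by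
          simp [Nat.card_fun]
      _ ≤ p ^ n := Nat.pow_le_pow_left hcardT n
  -- Step 2 : the key claim for finitely generated subgroups
  haveI hflat : Module.Flat ℤ ℚ := IsLocalization.flat ℚ (nonZeroDivisors ℤ)
  have key : ∀ B : AddSubgroup Γ, B.FG →
      Finite ((QuotientAddGroup.mk' φ.range).comp B.subtype).range ∧
      Nat.card ((QuotientAddGroup.mk' φ.range).comp B.subtype).range ≤ p ^ r * Nat.card K := by
    intro B hBfg
    have hBfg' : AddGroup.FG B := (AddGroup.fg_iff_addSubgroup_fg B).mpr hBfg
    obtain ⟨s, hfinq, hfinker, hcard, j, hj⟩ := fg_card_quot hp0 B hBfg'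
    -- s ≤ r
    have hsr : s ≤ r := by
      set g := (B.subtype.comp j).toIntLinearMap with hg
      have hginj : Function.Injective g := (AddSubgroup.subtype_injective B).comp hj
      have hbinj : Function.Injective (LinearMap.baseChange ℚ g) := by
        rw [LinearMap.baseChange_eq_ltensor]
        exact Module.Flat.lTensor_preserves_injective_linearMap g hginj
      have li := ((Pi.basisFun ℤ (Fin s)).baseChange ℚ).linearIndependent.map'
        (LinearMap.baseChange ℚ g) (LinearMap.ker_eq_bot.mpr hbinj)
      have hc := li.cardinal_lift_le_rank
      rw [Cardinal.mk_fin, hr] at hc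
      simpa using hc
    -- ker B ≤ K
    have hkerB : Nat.card (p • AddMonoidHom.id B).ker ≤ Nat.card K := by
      refine Nat.card_le_card_of_injective
        (fun x => (⟨((x : B) : Γ), ?_⟩ : K)) ?_
      · have hx : p • (x : B) = 0 := x.2
        exact (mem_phi_ker _).mpr (by exact_mod_cast congrArg (fun z : B => (z : Γ)) hx)
      · intro x y hxy
        have h0 := congrArg (fun z : K => (z : Γ)) hxy
        exact Subtype.ext (Subtype.ext h0)
    -- surjection from B ⧸ pB onto the image of B in V
    set ψ := ((QuotientAddGroup.mk' φ.range).comp B.subtype).rangeRestrict with hψ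
    have hψker : (p • AddMonoidHom.id B).range ≤ ψ.ker := by
      rintro z ⟨y, rfl⟩
      have : ((QuotientAddGroup.mk' φ.range).comp B.subtype) (p • y) = 0 := by
        rw [AddMonoidHom.comp_apply]
        rw [QuotientAddGroup.mk'_apply, QuotientAddGroup.eq_zero_iff]
        exact ⟨(y : Γ), rfl⟩
      rw [AddMonoidHom.mem_ker]
      exact Subtype.ext this
    set q := QuotientAddGroup.lift _ ψ hψker with hq
    have hqsurj : Function.Surjective q := by
      intro w
      obtain ⟨z, hz⟩ := AddMonoidHom.rangeRestrict_surjective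
        ((QuotientAddGroup.mk' φ.range).comp B.subtype) w
      exact ⟨QuotientAddGroup.mk z, by rw [hq, QuotientAddGroup.lift_mk]; exact hz⟩
    haveI hWfin : Finite ((QuotientAddGroup.mk' φ.range).comp B.subtype).range :=
      Finite.of_surjective q hqsurj
    refine ⟨hWfin, ?_⟩
    calc Nat.card ((QuotientAddGroup.mk' φ.range).comp B.subtype).range
        ≤ Nat.card (B ⧸ (p • AddMonoidHom.id B).range) :=
          Nat.card_le_card_of_surjective q hqsurj
      _ = p ^ s * Nat.card (p • AddMonoidHom.id B).ker := hcard
      _ ≤ p ^ r * Nat.card K :=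
          Nat.mul_le_mul (Nat.pow_le_pow_right hp.pos hsr) hkerB
  -- Step 3 : conclusion
  have hlift : ∀ v : V, ∃ g : Γ, QuotientAddGroup.mk' φ.range g = v :=
    QuotientAddGroup.mk'_surjective φ.range
  choose γ hγ using hlift
  haveI hVfin : Finite V := by
    by_contra h
    rw [not_finite_iff_infinite] at h
    obtain ⟨t, ht⟩ := Infinite.exists_subset_card_eq V (p ^ r * Nat.card K + 1)
    set B := AddSubgroup.closure (γ '' (t : Set V)) with hB
    have hBfg : B.FG := (AddSubgroup.fg_iff B).mpr
      ⟨γ '' (t : Set V), rfl, Set.Finite.image γ t.finite_toSet⟩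
    obtain ⟨hWfin, hWcard⟩ := key B hBfg
    have hmem : ∀ v ∈ t, v ∈ ((QuotientAddGroup.mk' φ.range).comp B.subtype).range := by
      intro v hv
      exact ⟨⟨γ v, AddSubgroup.subset_closure ⟨v, hv, rfl⟩⟩, hγ v⟩
    have hinj : Function.Injective
        (fun x : {v // v ∈ t} => (⟨(x : V), hmem x x.2⟩ :
          ((QuotientAddGroup.mk' φ.range).comp B.subtype).range)) := by
      intro x y hxy
      exact Subtype.ext
        (congrArg (fun z : ((QuotientAddGroup.mk' φ.range).comp B.subtype).range => (z : V)) hxy)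
    have := Nat.card_le_card_of_injective _ hinj
    rw [Nat.card_eq_finsetCard] at this
    omega
  have hVcard : Nat.card V ≤ p ^ r * Nat.card K := by
    set B := AddSubgroup.closure (Set.range γ) with hB
    have hBfg : B.FG := (AddSubgroup.fg_iff B).mpr
      ⟨Set.range γ, rfl, Set.finite_range γ⟩
    obtain ⟨hWfin, hWcard⟩ := key B hBfg
    have hmem : ∀ v : V, v ∈ ((QuotientAddGroup.mk' φ.range).comp B.subtype).range := by
      intro v
      exact ⟨⟨γ v, AddSubgroup.subset_closure ⟨v, rfl⟩⟩, hγ v⟩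
    have hinj : Function.Injective
        (fun v : V => (⟨v, hmem v⟩ :
          ((QuotientAddGroup.mk' φ.range).comp B.subtype).range)) := by
      intro x y hxy
      exact congrArg (fun z : ((QuotientAddGroup.mk' φ.range).comp B.subtype).range => (z : V)) hxy
    exact le_trans (Nat.card_le_card_of_injective _ hinj) hWcard
  refine ⟨hVfin, hVcard, ?_⟩
  calc p ^ r * Nat.card K ≤ p ^ r * p ^ n := Nat.mul_le_mul_left _ hKcard
    _ = p ^ (n + r) := by rw [← pow_add, Nat.add_comm]
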